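/- Exponential convergence of amplitude damping to its fixed point: for every p ∈ (0,1], every qubit density matrix ρ, and every k ∈ ℕ, the k-fold application of the amplitude damping channel satisfies ‖A_p^k(ρ) − E₀₀‖₂ ≤ 2·(1−p)^{k/2}, where E₀₀ = !![1,0;0,0]. -/

import Mathlib

open Matrix
open scoped ComplexOrder

noncomputable section

/-- The amplitude damping channel A_p(ρ) = K₀ρK₀† + K₁ρK₁†. -/
def ampDamp (p : ℝ) (ρ : Matrix (Fin 2) (Fin 2) ℂ) : Matrix (Fin 2) (Fin 2) ℂ :=
  !![1, 0; 0, (Real.sqrt (1 - p) : ℂ)] * ρ * (!![1, 0; 0, (Real.sqrt (1 - p) : ℂ)])ᴴ +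
    !![0, (Real.sqrt p : ℂ); 0, 0] * ρ * (!![0, (Real.sqrt p : ℂ); 0, 0])ᴴ

/-- The Frobenius (Hilbert–Schmidt) norm of a complex matrix. -/
def frob {m n : Type*} [Fintype m] [Fintype n] (A : Matrix m n ℂ) : ℝ :=
  Real.sqrt (∑ i, ∑ j, ‖A i j‖ ^ 2)

lemma ampDamp_step (p : ℝ) (hp0 : 0 ≤ p) (hp1 : p ≤ 1) (A B C D : ℂ) :
    ampDamp p !![A, B; C, D] =
      !![A + (p : ℂ) * D, (Real.sqrt (1 - p) : ℂ) * B;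
         (Real.sqrt (1 - p) : ℂ) * C, (1 - (p : ℂ)) * D] := by
  have h1 : ((Real.sqrt p : ℝ) : ℂ) * ((Real.sqrt p : ℝ) : ℂ) = (p : ℂ) := by
    rw [← Complex.ofReal_mul, Real.mul_self_sqrt hp0]
  have h2 : ((Real.sqrt (1 - p) : ℝ) : ℂ) * ((Real.sqrt (1 - p) : ℝ) : ℂ) = 1 - (p : ℂ) := by
    rw [← Complex.ofReal_mul, Real.mul_self_sqrt (by linarith)]; push_cast; ring
  have hct1 : (!![1, 0; 0, (Real.sqrt (1 - p) : ℂ)])ᴴ = !![1, 0; 0, (Real.sqrt (1 - p) : ℂ)] := by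
    ext i j; fin_cases i <;> fin_cases j <;>
      simp [Matrix.conjTranspose_apply, Complex.star_def, Complex.conj_ofReal]
  have hct2 : (!![0, (Real.sqrt p : ℂ); 0, 0])ᴴ = !![0, 0; (Real.sqrt p : ℂ), 0] := by
    ext i j; fin_cases i <;> fin_cases j <;>
      simp [Matrix.conjTranspose_apply, Complex.star_def, Complex.conj_ofReal]
  rw [ampDamp, hct1, hct2, Matrix.mul_fin_two, Matrix.mul_fin_two, Matrix.mul_fin_two,
    Matrix.mul_fin_two]
  ext i j; fin_cases i <;> fin_cases j <;> simp <;>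
    first
      | linear_combination D * h1
      | linear_combination D * h2
      | ring

lemma ampDamp_iter (p : ℝ) (hp0 : 0 ≤ p) (hp1 : p ≤ 1) (ρ : Matrix (Fin 2) (Fin 2) ℂ) (n : ℕ) :
    (ampDamp p)^[n] ρ =
      !![ρ 0 0 + (1 - ((1 - p : ℝ) : ℂ) ^ n) * ρ 1 1, ((Real.sqrt (1 - p) : ℂ)) ^ n * ρ 0 1;
         ((Real.sqrt (1 - p) : ℂ)) ^ n * ρ 1 0, ((1 - p : ℝ) : ℂ) ^ n * ρ 1 1] := by
  have hpq : ((1 - p : ℝ) : ℂ) = 1 - (p : ℂ) := by push_cast; ring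
  induction n with
  | zero => simp [← Matrix.eta_fin_two ρ]
  | succ n ih =>
    rw [Function.iterate_succ_apply', ih, ampDamp_step p hp0 hp1]
    ext i j
    fin_cases i <;> fin_cases j <;> simp [pow_succ] <;> push_cast <;> ring

theorem ampDamp_exponential_convergence (p : ℝ) (hp : p ∈ Set.Ioc (0 : ℝ) 1)
    (ρ : Matrix (Fin 2) (Fin 2) ℂ) (hρ : ρ.PosSemidef) (hρt : ρ.trace = 1) (k : ℕ) :
    frob ((ampDamp p)^[k] ρ - !![1, 0; 0, 0]) ≤ 2 * (1 - p) ^ ((k : ℝ) / 2) := by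
  obtain ⟨hp0, hp1⟩ := hp
  set q : ℝ := 1 - p with hq
  have hq0 : 0 ≤ q := by simp [hq]; linarith
  have hq1 : q ≤ 1 := by simp [hq]; linarith
  -- basic facts about ρ
  set d : ℝ := (ρ 1 1).re with hd
  set b : ℂ := ρ 0 1 with hb
  have hherm : ρᴴ = ρ := hρ.1
  have hH : ∀ i j, star (ρ j i) = ρ i j := fun i j =>
    (Matrix.conjTranspose_apply ρ j i).symm.trans (congrFun (congrFun hherm i) j)
  have h10 : ρ 1 0 = star b := (hH 1 0).symm
  have h11 : ρ 1 1 = (d : ℂ) := by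
    have : star (ρ 1 1) = ρ 1 1 := hH 1 1
    rw [Complex.ext_iff]
    constructor
    · simp [hd]
    · have him := congrArg Complex.im this
      simp [Complex.star_def] at him
      simp; linarith
  have htr : (ρ 0 0).re + d = 1 := by
    have := congrArg Complex.re hρt
    rw [Matrix.trace_fin_two] at this
    simpa using this
  have h00 : ρ 0 0 = ((1 - d : ℝ) : ℂ) := by
    have : star (ρ 0 0) = ρ 0 0 := hH 0 0
    have him := congrArg Complex.im this
    simp [Complex.star_def] at him
    rw [Complex.ext_iff]
    constructor
    · simp; linarith
    · simp; linarith
  have hd0 : 0 ≤ d := by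
    have := hρ.dotProduct_mulVec_nonneg ![0, 1]
    rw [Complex.le_def] at this
    have := this.1
    simpa [dotProduct, Matrix.mulVec, Fin.sum_univ_two, h11] using this
  have hd1 : d ≤ 1 := by
    have h := hρ.dotProduct_mulVec_nonneg ![1, 0]
    rw [Complex.le_def] at h
    have h := h.1
    simp [dotProduct, Matrix.mulVec, Fin.sum_univ_two, h00] at h
    linarith
  -- |b|^2 ≤ (1-d) d
  have hbd : Complex.normSq b ≤ (1 - d) * d := by
    have r1 := hρ.dotProduct_mulVec_nonneg ![(d : ℂ), -(star b)]
    have r2 := hρ.dotProduct_mulVec_nonneg ![-b, ((1 - d : ℝ) : ℂ)]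
    rw [Complex.le_def] at r1 r2
    have r1 := r1.1
    have r2 := r2.1
    simp [dotProduct, Matrix.mulVec, Fin.sum_univ_two, h00, h11, h10, hb,
      Complex.add_re, Complex.mul_re, Complex.ofReal_re, Complex.ofReal_im] at r1 r2
    nlinarith [r1, r2, Complex.normSq_apply b]
  -- closed form of the iterate and the difference matrix
  have hs : Real.sqrt (1 - p) * Real.sqrt (1 - p) = 1 - p :=
    Real.mul_self_sqrt (by linarith)
  have hM : (ampDamp p)^[k] ρ - !![1, 0; 0, 0] =
      !![((-((1 - p) ^ k * d) : ℝ) : ℂ), ((Real.sqrt (1 - p) : ℂ)) ^ k * b;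
         ((Real.sqrt (1 - p) : ℂ)) ^ k * star b, (((1 - p) ^ k * d : ℝ) : ℂ)] := by
    rw [ampDamp_iter p hp0.le hp1 ρ k]
    ext i j
    fin_cases i <;> fin_cases j <;> simp [h00, h11, h10, ← hb] <;> push_cast <;> ring
  set Q : ℝ := (1 - p) ^ k with hQ
  have hQ0 : 0 ≤ Q := pow_nonneg (by linarith) k
  have hQ1 : Q ≤ 1 := pow_le_one₀ (by linarith) (by linarith)
  have hnb : Complex.normSq (((Real.sqrt (1 - p) : ℝ) : ℂ) ^ k * b) = Q * Complex.normSq b := by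
    rw [_root_.map_mul, ← Complex.ofReal_pow, Complex.normSq_ofReal, ← mul_pow, hs]
  have hnb' : Complex.normSq (((Real.sqrt (1 - p) : ℝ) : ℂ) ^ k * star b)
      = Q * Complex.normSq b := by
    rw [_root_.map_mul, ← Complex.ofReal_pow, Complex.normSq_ofReal, ← mul_pow, hs,
      Complex.star_def, Complex.normSq_conj]
  have hfrob : frob ((ampDamp p)^[k] ρ - !![1, 0; 0, 0])
      = Real.sqrt (2 * (Q * d) ^ 2 + 2 * (Q * Complex.normSq b)) := by
    rw [frob, hM]
    congr 1
    simp [Fin.sum_univ_two, Complex.sq_norm, hnb, hnb', Complex.normSq_ofReal]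
    rw [hs, ← hQ]
    ring
  have hB : 0 ≤ Complex.normSq b := Complex.normSq_nonneg b
  have hbound : 2 * (Q * d) ^ 2 + 2 * (Q * Complex.normSq b) ≤ 4 * Q := by
    nlinarith [mul_le_mul_of_nonneg_left hbd hQ0, mul_le_of_le_one_right hQ0 hd1,
      mul_nonneg hQ0 hd0, mul_nonneg (mul_nonneg hQ0 hQ0) (mul_nonneg hd0 hd0),
      mul_le_mul_of_nonneg_right hQ1 (mul_nonneg hQ0 (mul_nonneg hd0 hd0))]
  have hrhs : (1 - p) ^ ((k : ℝ) / 2) = Real.sqrt Q := by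
    rw [hQ, Real.sqrt_eq_rpow, ← Real.rpow_natCast (1 - p) k,
      ← Real.rpow_mul (by linarith)]
    congr 1
    ring
  rw [hfrob, hrhs]
  calc Real.sqrt (2 * (Q * d) ^ 2 + 2 * (Q * Complex.normSq b))
      ≤ Real.sqrt (4 * Q) := Real.sqrt_le_sqrt hbound
    _ = 2 * Real.sqrt Q := by
        rw [show (4 : ℝ) * Q = 2 ^ 2 * Q by ring, Real.sqrt_mul (by positivity),
          Real.sqrt_sq (by norm_num)]
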